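/- Sandwiching the active set: let C > 0, fix λ with 0 < ‖λ‖ < min(1, C/(8 max(τ_p, τ_d))), and let (x,y,s) ∈ N̄(γ,λ) with μ_λ < min(1, (C/(2 max(τ_p,τ_d) C₂))²). Then there exists an optimal solution (x*,y*,s*) of the original QP such that {i : s_i ≥ C} ⊆ {i : s*_i > 0} ⊆ {i : x*_i = 0} ⊆ {i : x_i < C}. -/

import Mathlib

open Matrix

/-- Euclidean norm of a finite real vector. -/
noncomputable def eucNorm {ι : Type*} [Fintype ι] (v : ι → ℝ) : ℝ :=
  Real.sqrt (∑ i, v i ^ 2)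

/-- Perturbed duality measure `μ_λ = (x+λ)ᵀ(s+λ)/n`. -/
noncomputable def muLam {n : ℕ} (lam x s : Fin n → ℝ) : ℝ :=
  (∑ i, (x i + lam i) * (s i + lam i)) / n

/-- Membership in the symmetric neighbourhood `N̄(γ, λ)` of the perturbed
central path. -/
def InSymNbhd {m n : ℕ} (H : Matrix (Fin n) (Fin n) ℝ)
    (A : Matrix (Fin m) (Fin n) ℝ) (b : Fin m → ℝ) (c : Fin n → ℝ)
    (γ : ℝ) (lam x s : Fin n → ℝ) (y : Fin m → ℝ) : Prop :=
  A.mulVec x = b ∧ Aᵀ.mulVec y + s - H.mulVec x = c ∧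
  (∀ i, 0 < x i + lam i) ∧ (∀ i, 0 < s i + lam i) ∧
  ∀ i, γ * muLam lam x s ≤ (x i + lam i) * (s i + lam i) ∧
    (x i + lam i) * (s i + lam i) ≤ muLam lam x s / γ

/-- The KKT conditions of the original QP. -/
def KKT {m n : ℕ} (H : Matrix (Fin n) (Fin n) ℝ) (A : Matrix (Fin m) (Fin n) ℝ)
    (b : Fin m → ℝ) (c : Fin n → ℝ)
    (xs : Fin n → ℝ) (ys : Fin m → ℝ) (ss : Fin n → ℝ) : Prop :=
  A.mulVec xs = b ∧ Aᵀ.mulVec ys + ss - H.mulVec xs = c ∧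
  (∀ i, xs i * ss i = 0) ∧ 0 ≤ xs ∧ 0 ≤ ss

/-- `C₂ = √(n/γ) + n`. -/
noncomputable def C2 (n : ℕ) (γ : ℝ) : ℝ := Real.sqrt (n / γ) + n

/-- The proximity bound `C₂ √μ_λ max(√μ_λ, 1) + 4‖λ‖ max(‖λ‖, 1)`. -/
noncomputable def proxBound {n : ℕ} (γ : ℝ) (lam x s : Fin n → ℝ) : ℝ :=
  C2 n γ * Real.sqrt (muLam lam x s) * max (Real.sqrt (muLam lam x s)) 1
    + 4 * eucNorm lam * max (eucNorm lam) 1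

/-- Sandwiching the active set: let `C > 0`, fix `λ` with
`0 < ‖λ‖ < min(1, C/(8 max(τ_p, τ_d)))`, and let `(x,y,s) ∈ N̄(γ,λ)` with
`μ_λ < min(1, (C/(2 max(τ_p,τ_d) C₂))²)`. Then there is an optimal solution
`(x*,y*,s*)` of the original QP with
`{i : sᵢ ≥ C} ⊆ {i : s*ᵢ > 0} ⊆ {i : x*ᵢ = 0} ⊆ {i : xᵢ < C}`. -/
lemma enorm_nonneg' {ι : Type*} [Fintype ι] (v : ι → ℝ) : 0 ≤ eucNorm v :=
  Real.sqrt_nonneg _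

lemma proxBound_nonneg' {n : ℕ} (γ : ℝ) (lam x s : Fin n → ℝ) :
    0 ≤ proxBound γ lam x s := by
  unfold proxBound C2 eucNorm
  positivity

theorem active_set_sandwich {m n : ℕ}
    (H : Matrix (Fin n) (Fin n) ℝ) (A : Matrix (Fin m) (Fin n) ℝ)
    (b : Fin m → ℝ) (c : Fin n → ℝ) (hH : H.PosSemidef)
    (γ : ℝ) (hγ : γ ∈ Set.Ioo (0 : ℝ) 1)
    (τp τd : ℝ) (hτp : 0 < τp) (hτd : 0 < τd)
    (C : ℝ) (hC : 0 < C)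
    (lam : Fin n → ℝ) (hlam : 0 ≤ lam) (hlam0 : 0 < eucNorm lam)
    (hlamub : eucNorm lam < min 1 (C / (8 * max τp τd)))
    (x : Fin n → ℝ) (y : Fin m → ℝ) (s : Fin n → ℝ)
    (hmem : InSymNbhd H A b c γ lam x s y)
    (hmu : muLam lam x s < min 1 ((C / (2 * max τp τd * C2 n γ)) ^ 2))
    (hprox : ∃ (xs : Fin n → ℝ) (ys : Fin m → ℝ) (ss : Fin n → ℝ),
      KKT H A b c xs ys ss ∧
      eucNorm (x - xs) < τp * proxBound γ lam x s ∧
      eucNorm (s - ss) < τd * proxBound γ lam x s) :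
    ∃ (xs : Fin n → ℝ) (ys : Fin m → ℝ) (ss : Fin n → ℝ),
      KKT H A b c xs ys ss ∧
      {i : Fin n | C ≤ s i} ⊆ {i : Fin n | 0 < ss i} ∧
      {i : Fin n | 0 < ss i} ⊆ {i : Fin n | xs i = 0} ∧
      {i : Fin n | xs i = 0} ⊆ {i : Fin n | x i < C} := by
  obtain ⟨xs, ys, ss, hK, hpx, hps⟩ := hprox
  have hT : 0 < max τp τd := lt_of_lt_of_le hτp (le_max_left _ _)
  have hlam1 : eucNorm lam < 1 := lt_of_lt_of_le hlamub (min_le_left _ _)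
  have hlamC : eucNorm lam < C / (8 * max τp τd) :=
    lt_of_lt_of_le hlamub (min_le_right _ _)
  have hmu1 : muLam lam x s < 1 := lt_of_lt_of_le hmu (min_le_left _ _)
  have hmu2 : muLam lam x s < (C / (2 * max τp τd * C2 n γ)) ^ 2 :=
    lt_of_lt_of_le hmu (min_le_right _ _)
  have hmu0 : 0 ≤ muLam lam x s := by
    apply div_nonneg _ (Nat.cast_nonneg n)
    apply Finset.sum_nonneg
    intro i _
    exact le_of_lt (mul_pos (hmem.2.2.1 i) (hmem.2.2.2.1 i))
  have hsqrt1 : Real.sqrt (muLam lam x s) < 1 := by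
    rw [show (1:ℝ) = Real.sqrt 1 by simp]
    exact Real.sqrt_lt_sqrt hmu0 (by simpa using hmu1)
  have hmax1 : max (Real.sqrt (muLam lam x s)) 1 = 1 := max_eq_right hsqrt1.le
  have hmaxl : max (eucNorm lam) 1 = 1 := max_eq_right hlam1.le
  -- the key bound, valid whenever n > 0
  have key : 0 < n → proxBound γ lam x s < C / max τp τd := by
    intro hn
    have hC2 : (1:ℝ) ≤ C2 n γ := by
      have h1 : (1:ℝ) ≤ (n:ℝ) := by exact_mod_cast hn
      have h2 : 0 ≤ Real.sqrt ((n:ℝ)/γ) := Real.sqrt_nonneg _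
      unfold C2; linarith
    have hC2pos : 0 < C2 n γ := lt_of_lt_of_le one_pos hC2
    have hpos : 0 < C / (2 * max τp τd * C2 n γ) :=
      div_pos hC (by positivity)
    have hsq : Real.sqrt (muLam lam x s) < C / (2 * max τp τd * C2 n γ) :=
      (Real.sqrt_lt' hpos).2 hmu2
    have h1 : C2 n γ * Real.sqrt (muLam lam x s) < C / (2 * max τp τd) := by
      have := mul_lt_mul_of_pos_left hsq hC2pos
      calc C2 n γ * Real.sqrt (muLam lam x s)
          < C2 n γ * (C / (2 * max τp τd * C2 n γ)) := this
        _ = C / (2 * max τp τd) := by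
            field_simp
    have h2 : 4 * eucNorm lam < C / (2 * max τp τd) := by
      rw [lt_div_iff₀ (by positivity)] at hlamC
      rw [lt_div_iff₀ (by positivity)]
      linarith
    unfold proxBound
    rw [hmax1, hmaxl, mul_one, mul_one]
    have : C / (2 * max τp τd) + C / (2 * max τp τd) = C / max τp τd := by
      field_simp; ring
    linarith
  have coord : ∀ (v : Fin n → ℝ) (i : Fin n), |v i| ≤ eucNorm v := by
    intro v i
    have h1 : (v i) ^ 2 ≤ ∑ j, v j ^ 2 :=
      Finset.single_le_sum (fun j _ => sq_nonneg (v j)) (Finset.mem_univ i)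
    calc |v i| = Real.sqrt ((v i) ^ 2) := (Real.sqrt_sq_eq_abs _).symm
      _ ≤ eucNorm v := Real.sqrt_le_sqrt h1
  refine ⟨xs, ys, ss, hK, ?_, ?_, ?_⟩
  · intro i hi
    have hn : 0 < n := i.pos
    have hbound : eucNorm (s - ss) < C := by
      calc eucNorm (s - ss) < τd * proxBound γ lam x s := hps
        _ ≤ max τp τd * (C / max τp τd) := by
            apply mul_le_mul (le_max_right _ _) (key hn).le _ hT.le
            exact proxBound_nonneg' γ lam x s
        _ = C := by field_simp
    have := coord (s - ss) i
    simp only [Pi.sub_apply] at this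
    have hsi : C ≤ s i := hi
    have : |s i - ss i| < C := lt_of_le_of_lt this hbound
    have := abs_lt.1 this
    show 0 < ss i
    linarith [this.1, this.2]
  · intro i hi
    have h := hK.2.2.1 i
    have hx : 0 ≤ xs i := hK.2.2.2.1 i
    have hs : (0:ℝ) < ss i := hi
    show xs i = 0
    by_contra hne
    have : 0 < xs i := lt_of_le_of_ne hx (Ne.symm hne)
    nlinarith
  · intro i hi
    have hn : 0 < n := i.pos
    have hbound : eucNorm (x - xs) < C := by
      calc eucNorm (x - xs) < τp * proxBound γ lam x s := hpx
        _ ≤ max τp τd * proxBound γ lam x s := by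
            apply mul_le_mul_of_nonneg_right (le_max_left _ _)
            exact proxBound_nonneg' γ lam x s
        _ ≤ max τp τd * (C / max τp τd) :=
            mul_le_mul_of_nonneg_left (key hn).le hT.le
        _ = C := by field_simp
    have := coord (x - xs) i
    simp only [Pi.sub_apply] at this
    have hxi : xs i = 0 := hi
    have : |x i - xs i| < C := lt_of_le_of_lt this hbound
    have := abs_lt.1 this
    show x i < C
    linarith [this.2]
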